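/- The poset Q⁰_λ ordered by ≤⁰ is (<λ⁺)-complete as a forcing notion: every ≤⁰-increasing sequence of length ≤ λ of elements of Q⁰_λ has a ≤⁰-upper bound, and |Q⁰_λ| = 2^(2^(<λ)). -/

import Mathlib

open Set

noncomputable section

def IsUltrafilterOn {α : Type*} (Z : Set α) (d : Set (Set α)) : Prop :=
  (∀ A ∈ d, A ⊆ Z) ∧ Z ∈ d ∧ ∅ ∉ d ∧
  (∀ A B : Set α, A ∈ d → A ⊆ B → B ⊆ Z → B ∈ d) ∧
  (∀ A B : Set α, A ∈ d → B ∈ d → A ∩ B ∈ d) ∧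
  (∀ A : Set α, A ⊆ Z → (A ∈ d ∨ Z \ A ∈ d))

def IsNonprincipalOn {α : Type*} (Z : Set α) (d : Set (Set α)) : Prop :=
  IsUltrafilterOn Z d ∧ ∀ x : α, {x} ∉ d

def IsClubIn (C : Set Ordinal) (lam : Ordinal) : Prop :=
  C ⊆ Iio lam ∧ (∀ β < lam, ∃ δ ∈ C, β < δ) ∧
  (∀ β < lam, β ≠ 0 → sSup (C ∩ Iio β) = β → β ∈ C)

def nextIn (C : Set Ordinal) (δ : Ordinal) : Ordinal := sInf (C \ Iic δ)

/-- An element of `Q⁰_λ`, normalized so that the ultrafilter assignment vanishes off the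
club `C` (so that elements of the type correspond exactly to the tuples of the paper). -/
structure QZero (lam : Ordinal) where
  C : Set Ordinal
  d : Ordinal → Set (Set Ordinal)
  club : IsClubIn C lam
  limit : ∀ δ ∈ C, Order.IsSuccLimit δ
  ultra : ∀ δ ∈ C, IsNonprincipalOn (Ico δ (nextIn C δ)) (d δ)
  d_junk : ∀ δ, δ ∉ C → d δ = ∅

def QZero.Z {lam : Ordinal} (p : QZero lam) (δ : Ordinal) : Set Ordinal :=
  Ico δ (nextIn p.C δ)

def fil {lam : Ordinal} (p : QZero lam) : Set (Set Ordinal) :=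
  {A | A ⊆ Iio lam ∧ ∃ ε < lam, ∀ δ ∈ p.C, ε ≤ δ → A ∩ p.Z δ ∈ p.d δ}

def le0 {lam : Ordinal} (p q : QZero lam) : Prop := fil p ⊆ fil q

namespace S16

variable {Z : Set Ordinal} {d : Set (Set Ordinal)}

lemma uf_sub (h : IsUltrafilterOn Z d) : ∀ A ∈ d, A ⊆ Z := h.1
lemma uf_Z (h : IsUltrafilterOn Z d) : Z ∈ d := h.2.1
lemma uf_empty (h : IsUltrafilterOn Z d) : ∅ ∉ d := h.2.2.1
lemma uf_up (h : IsUltrafilterOn Z d) : ∀ A B : Set Ordinal, A ∈ d → A ⊆ B → B ⊆ Z → B ∈ d := h.2.2.2.1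
lemma uf_inter (h : IsUltrafilterOn Z d) : ∀ A B : Set Ordinal, A ∈ d → B ∈ d → A ∩ B ∈ d := h.2.2.2.2.1

/-- members of a nonprincipal ultrafilter are infinite -/
lemma np_infinite (h : IsNonprincipalOn Z d) {A : Set Ordinal} (hA : A ∈ d) : A.Infinite := by
  by_contra hfin
  rw [Set.not_infinite] at hfin
  have key : ∀ B : Set Ordinal, B.Finite → B ∉ d := by
    intro B hB
    refine Set.Finite.induction_on (motive := fun B _ => B ∉ d) B hB h.1.2.2.1 ?_
    intro x S hx hS ih hmem
    have hsubZ : insert x S ⊆ Z := uf_sub h.1 _ hmem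
    have hxZ : ({x} : Set Ordinal) ⊆ Z := by
      intro y hy; rcases hy with rfl; exact hsubZ (mem_insert _ _)
    have hcompl : Z \ {x} ∈ d := by
      rcases h.1.2.2.2.2.2 {x} hxZ with h1 | h2
      · exact absurd h1 (h.2 x)
      · exact h2
    have hm : (insert x S) ∩ (Z \ {x}) ∈ d := uf_inter h.1 _ _ hmem hcompl
    have heq : (insert x S) ∩ (Z \ {x}) = S := by
      ext y
      constructor
      · rintro ⟨hy1, hy2, hy3⟩
        rcases hy1 with rfl | hy1
        · exact absurd rfl hy3
        · exact hy1
      · intro hy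
        refine ⟨mem_insert_of_mem _ hy, hsubZ (mem_insert_of_mem _ hy), ?_⟩
        intro hcon; rw [mem_singleton_iff] at hcon; subst hcon; exact hx hy
    rw [heq] at hm
    exact ih hm
  exact key A hfin hA

/-- finite intersections of members are members -/
lemma uf_finset_inter (h : IsUltrafilterOn Z d) (T : Finset (Set Ordinal))
    (hT : ∀ B ∈ T, B ∈ d) : Z ∩ ⋂₀ ↑T ∈ d := by
  classical
  induction T using Finset.induction_on with
  | empty => simpa using uf_Z h
  | @insert B T hB ih =>
    have h1 : B ∈ d := hT B (Finset.mem_insert_self _ _)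
    have h2 : Z ∩ ⋂₀ ↑T ∈ d := ih (fun B hB => hT B (Finset.mem_insert_of_mem hB))
    have hm := uf_inter h _ _ h1 h2
    have heq : B ∩ (Z ∩ ⋂₀ ↑T) = Z ∩ ⋂₀ ↑(insert B T) := by
      rw [Finset.coe_insert, sInter_insert]
      ext x; constructor
      · rintro ⟨h1, h2, h3⟩; exact ⟨h2, h1, h3⟩
      · rintro ⟨h1, h2, h3⟩; exact ⟨h2, h1, h3⟩
    rwa [heq] at hm

/-- Existence of a nonprincipal ultrafilter extending a family with the
strong finite intersection property. -/
lemma exists_np (Z : Set Ordinal) (G : Set (Set Ordinal))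
    (hfip : ∀ T : Finset (Set Ordinal), ↑T ⊆ G → (Z ∩ ⋂₀ ↑T).Infinite) :
    ∃ d, IsNonprincipalOn Z d ∧ ∀ A ∈ G, A ∩ Z ∈ d := by
  classical
  set S : Set (Set ↥Z) := (fun A : Set Ordinal => (Subtype.val ⁻¹' A : Set ↥Z)) '' G with hS
  -- key: preimages of finite subfamilies are infinite
  have hpre : ∀ T : Finset (Set Ordinal), ↑T ⊆ G →
      ((Subtype.val ⁻¹' (⋂₀ ↑T)) : Set ↥Z).Infinite := by
    intro T hTG
    have hinf : (Z ∩ ⋂₀ ↑T).Infinite := hfip T hTG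
    have : ((Subtype.val ⁻¹' (Z ∩ ⋂₀ ↑T)) : Set ↥Z).Infinite := by
      apply Set.Infinite.preimage hinf
      rw [Subtype.range_coe]
      exact inter_subset_left
    exact this.mono (fun x hx => hx.2)
  have hZinf : Z.Infinite := by simpa using hfip ∅ (by simp)
  haveI : Infinite ↥Z := hZinf.to_subtype
  have hne : Filter.NeBot ((Filter.generate S) ⊓ Filter.cofinite) := by
    rw [Filter.inf_neBot_iff]
    intro s hs t ht
    rw [Filter.mem_generate_iff] at hs
    obtain ⟨T', hT'S, hT'fin, hT'sub⟩ := hs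
    haveI : Finite ↥T' := hT'fin.to_subtype
    obtain ⟨TG, hTGsub, hTGfin, hTG⟩ : ∃ TG : Set (Set Ordinal), TG ⊆ G ∧ TG.Finite ∧
        T' ⊆ (fun A : Set Ordinal => (Subtype.val ⁻¹' A : Set ↥Z)) '' TG := by
      choose g hg1 hg2 using fun (x : T') => hT'S x.2
      refine ⟨range g, ?_, finite_range g, ?_⟩
      · rintro _ ⟨x, rfl⟩; exact hg1 x
      · intro x hx
        exact ⟨g ⟨x, hx⟩, mem_range_self _, hg2 ⟨x, hx⟩⟩
    have hTsub : ((Subtype.val ⁻¹' (⋂₀ ↑hTGfin.toFinset)) : Set ↥Z) ⊆ ⋂₀ T' := by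
      intro x hx
      rw [mem_sInter]
      intro u hu
      obtain ⟨A, hA, rfl⟩ := hTG hu
      simp only [mem_preimage, mem_sInter] at hx ⊢
      exact hx A (by simpa using hA)
    have hinf2 := hpre hTGfin.toFinset (by simpa using hTGsub)
    rw [Filter.mem_cofinite] at ht
    have hinf4 : ((Subtype.val ⁻¹' (⋂₀ ↑hTGfin.toFinset)) \ tᶜ : Set ↥Z).Infinite :=
      hinf2.diff ht
    obtain ⟨x, hx1, hx2⟩ := hinf4.nonempty
    exact ⟨x, hT'sub (hTsub hx1), not_not.1 hx2⟩
  -- extend to an ultrafilter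
  haveI := hne
  obtain ⟨U, hU⟩ := Ultrafilter.exists_le ((Filter.generate S) ⊓ Filter.cofinite)
  refine ⟨{B | B ⊆ Z ∧ (Subtype.val ⁻¹' B : Set ↥Z) ∈ U}, ⟨⟨?_, ?_, ?_, ?_, ?_, ?_⟩, ?_⟩, ?_⟩
  · exact fun A hA => hA.1
  · refine ⟨Subset.rfl, ?_⟩
    have : (Subtype.val ⁻¹' Z : Set ↥Z) = univ := by
      ext x; simp [x.2]
    rw [this]; exact Filter.univ_mem
  · rintro ⟨-, hc⟩
    rw [preimage_empty] at hc
    exact U.empty_notMem hc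
  · rintro A B ⟨hAZ, hAU⟩ hAB hBZ
    exact ⟨hBZ, Filter.mem_of_superset hAU (preimage_mono hAB)⟩
  · rintro A B ⟨hAZ, hAU⟩ ⟨hBZ, hBU⟩
    exact ⟨(inter_subset_left).trans hAZ, by rw [preimage_inter]; exact Filter.inter_mem hAU hBU⟩
  · intro A hAZ
    rcases U.mem_or_compl_mem (Subtype.val ⁻¹' A) with h1 | h2
    · exact Or.inl ⟨hAZ, h1⟩
    · refine Or.inr ⟨diff_subset, ?_⟩
      have : (Subtype.val ⁻¹' (Z \ A) : Set ↥Z) = (Subtype.val ⁻¹' A)ᶜ := by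
        ext x; simp [x.2]
      rw [this]; exact h2
  · rintro x ⟨hxZ, hxU⟩
    have hx : x ∈ Z := hxZ rfl
    have hcof : ({(⟨x, hx⟩ : ↥Z)} : Set ↥Z)ᶜ ∈ U := by
      apply hU.trans inf_le_right
      rw [Filter.mem_cofinite, compl_compl]
      exact finite_singleton _
    have hsing : (Subtype.val ⁻¹' ({x} : Set Ordinal) : Set ↥Z) = {(⟨x, hx⟩ : ↥Z)} := by
      ext y; simp [Subtype.ext_iff]
    rw [hsing] at hxU
    have := Filter.inter_mem hxU hcof
    rw [inter_compl_self] at this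
    exact U.empty_notMem this
  · intro A hA
    refine ⟨inter_subset_right, ?_⟩
    have hmem : (Subtype.val ⁻¹' A : Set ↥Z) ∈ U := by
      apply hU.trans inf_le_left
      exact Filter.mem_generate_of_mem ⟨A, hA, rfl⟩
    have : (Subtype.val ⁻¹' (A ∩ Z) : Set ↥Z) = Subtype.val ⁻¹' A := by
      ext y; simp [y.2]
    rw [this]; exact hmem

end S16

section Clubs
open Ordinal

variable {lam : Ordinal.{0}} {C : Set Ordinal} {κ : Cardinal.{0}}

lemma club_unbounded' (hC : IsClubIn C lam) {β : Ordinal} (hβ : β < lam) :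
    (C \ Iic β).Nonempty := by
  obtain ⟨δ, hδ, hlt⟩ := hC.2.1 β hβ
  exact ⟨δ, hδ, by simpa using hlt⟩

lemma nextIn_mem (hC : IsClubIn C lam) {β : Ordinal} (hβ : β < lam) : nextIn C β ∈ C :=
  (csInf_mem (club_unbounded' hC hβ)).1

lemma lt_nextIn (hC : IsClubIn C lam) {β : Ordinal} (hβ : β < lam) : β < nextIn C β := by
  have := (csInf_mem (club_unbounded' hC hβ)).2
  simpa [nextIn] using this

lemma nextIn_lt_lam (hC : IsClubIn C lam) {β : Ordinal} (hβ : β < lam) : nextIn C β < lam :=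
  hC.1 (nextIn_mem hC hβ)

lemma nextIn_le (hC : IsClubIn C lam) {β c : Ordinal} (hc : c ∈ C) (hbc : β < c) :
    nextIn C β ≤ c :=
  csInf_le' ⟨hc, by simpa using hbc⟩

lemma nextIn_mono (hC : IsClubIn C lam) {a b : Ordinal} (hab : a ≤ b) (hb : b < lam) :
    nextIn C a ≤ nextIn C b := by
  have hmem := csInf_mem (club_unbounded' hC hb)
  refine csInf_le' ⟨hmem.1, ?_⟩
  have h2 : b < sInf (C \ Iic b) := by simpa using hmem.2
  simp only [mem_Iic, not_le]
  exact hab.trans_lt h2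

lemma sSup_inter_Iio_eq {α : Ordinal} (hα : α ≠ 0)
    (h : ∀ β < α, ∃ c ∈ C, β < c ∧ c < α) : sSup (C ∩ Iio α) = α := by
  apply le_antisymm
  · exact csSup_le' (fun x hx => hx.2.le)
  · by_contra hlt
    push_neg at hlt
    obtain ⟨c, hcC, hc1, hc2⟩ := h _ hlt
    have hle : c ≤ sSup (C ∩ Iio α) :=
      le_csSup ⟨α, fun x hx => hx.2.le⟩ ⟨hcC, hc2⟩
    exact absurd (hc1.trans_le hle) (lt_irrefl _)

lemma exists_mem_of_sSup_eq {α β : Ordinal} (h : sSup (C ∩ Iio α) = α) (hβ : β < α) :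
    ∃ c ∈ C, β < c ∧ c < α := by
  by_contra hcon
  push_neg at hcon
  have hub : sSup (C ∩ Iio α) ≤ β := by
    apply csSup_le' (fun x hx => ?_)
    by_contra hxβ
    push_neg at hxβ
    exact absurd (hcon x hx.1 hxβ) (not_le.2 hx.2)
  rw [h] at hub
  exact absurd hβ (not_lt.2 hub)

lemma add_lt_lam (hκ : κ.IsRegular) {a b : Ordinal} (ha : a < κ.ord) (hb : b < κ.ord) :
    a + b < κ.ord := by
  rw [Cardinal.lt_ord] at *
  rw [Ordinal.card_add]
  exact Cardinal.add_lt_of_lt hκ.aleph0_le ha hb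

/-- the set of closure points of `f` below `lam` -/
def cpts (f : Ordinal → Ordinal) (lam : Ordinal) : Set Ordinal :=
  {α | α < lam ∧ omega0 ≤ α ∧ ∀ β < α, f β < α}

lemma cpts_isLimit {f : Ordinal → Ordinal} {α : Ordinal}
    (h : α ∈ cpts f lam) (hf2 : ∀ β < lam, β < f β) : Order.IsSuccLimit α := by
  refine Ordinal.isSuccLimit_iff.2 ⟨?_, Order.isSuccPrelimit_iff_succ_lt.2 fun a ha => ?_⟩
  · rintro rfl
    exact absurd h.2.1 (by simp [Ordinal.omega0_ne_zero, pos_iff_ne_zero])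
  · have ha' : a < lam := ha.trans h.1
    have h1 : a < f a := hf2 a ha'
    have h2 : f a < α := h.2.2 a ha
    exact lt_of_le_of_lt (Order.succ_le_of_lt h1) h2

lemma cpts_club (hκ : κ.IsRegular) (hunc : Cardinal.aleph0 < κ) (f : Ordinal → Ordinal)
    (hf1 : ∀ β < κ.ord, f β < κ.ord) (hf2 : ∀ β < κ.ord, β < f β) :
    IsClubIn (cpts f κ.ord) κ.ord := by
  have hlim : Order.IsSuccLimit κ.ord := Cardinal.isSuccLimit_ord hκ.aleph0_le
  have hω : omega0 < κ.ord := Cardinal.omega0_lt_ord.2 hunc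
  set lam := κ.ord with hlam
  -- the "sup of f below" function
  set F : Ordinal → Ordinal := fun γ => Ordinal.bsup (γ + 1) (fun b _ => f b) with hF
  have hcard : ∀ γ < lam, (γ + 1).card < κ.ord.cof := by
    intro γ hγ
    rw [hκ.cof_eq, ← Cardinal.lt_ord]
    exact hlim.succ_lt hγ
  have hF1 : ∀ γ < lam, F γ < lam := by
    intro γ hγ
    exact Ordinal.bsup_lt_ord (hcard γ hγ)
      (fun i hi => hf1 i (lt_of_le_of_lt (Order.lt_succ_iff.1 hi) hγ))
  have hFge : ∀ γ < lam, ∀ b ≤ γ, f b ≤ F γ := by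
    intro γ hγ b hb
    exact Ordinal.le_bsup (fun b _ => f b) b (Order.lt_succ_iff.2 hb)
  refine ⟨fun α hα => hα.1, ?_, ?_⟩
  · -- unbounded
    intro β hβ
    set g : ℕ → Ordinal := fun n => Nat.rec (β + omega0) (fun _ ih => F ih + 1) n with hg
    have hglam : ∀ n, g n < lam := by
      intro n
      induction n with
      | zero => exact add_lt_lam hκ hβ hω
      | succ n ih => exact hlim.succ_lt (hF1 _ ih)
    have hgmono : ∀ n, g n < g (n + 1) := by
      intro n
      have h1 : g n < f (g n) := hf2 _ (hglam n)
      have h2 : f (g n) ≤ F (g n) := hFge _ (hglam n) _ le_rfl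
      exact lt_of_le_of_lt h2 (lt_add_one _) |>.trans_le le_rfl |> (fun h' => h1.trans h')
    set α := ⨆ n, g n with hα
    have hbdd : BddAbove (range g) := Ordinal.bddAbove_range g
    have hαlam : α < lam := by
      apply Ordinal.iSup_lt_ord _ hglam
      rw [hκ.cof_eq, Cardinal.mk_nat]
      exact hunc
    have hle : ∀ n, g n ≤ α := fun n => le_ciSup hbdd n
    refine ⟨α, ⟨hαlam, ?_, ?_⟩, ?_⟩
    · exact le_trans (le_add_self) (hle 0)
    · intro b hb
      have : ∃ n, b < g n := by
        by_contra hcon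
        push_neg at hcon
        exact absurd hb (not_lt.2 (ciSup_le hcon))
      obtain ⟨n, hn⟩ := this
      calc f b ≤ F (g n) := hFge _ (hglam n) _ hn.le
        _ < g (n + 1) := lt_add_one _
        _ ≤ α := hle (n + 1)
    · calc β < β + omega0 := by
            simpa using (add_lt_add_iff_left β).2 omega0_pos
        _ ≤ α := hle 0
  · -- closed
    intro β hβ hβ0 hsup
    have hne : (cpts f lam ∩ Iio β).Nonempty := by
      by_contra hcon
      rw [not_nonempty_iff_eq_empty] at hcon
      rw [hcon] at hsup
      simp at hsup
      exact hβ0 hsup.symm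
    obtain ⟨e, heC, heβ⟩ := hne
    refine ⟨hβ, le_trans heC.2.1 heβ.le, ?_⟩
    intro b hb
    obtain ⟨c, hcC, hc1, hc2⟩ := exists_mem_of_sSup_eq hsup hb
    exact (hcC.2.2 b hc1).trans hc2

lemma cpts_mem_limit (hκ : κ.IsRegular) {f : Ordinal → Ordinal}
    (hf2 : ∀ β < κ.ord, β < f β) : ∀ α ∈ cpts f κ.ord, Order.IsSuccLimit α :=
  fun _ h => cpts_isLimit h hf2

/-- intervals below a limit ordinal are infinite -/
lemma Ico_infinite' {a b : Ordinal} (hb : Order.IsSuccLimit b) (hab : a < b) : (Ico a b).Infinite := by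
  have hmem : ∀ n : ℕ, a + n ∈ Ico a b := by
    intro n
    induction n with
    | zero => simpa using hab
    | succ n ih =>
      refine ⟨le_self_add, ?_⟩
      have : (a + n) + 1 < b := hb.succ_lt ih.2
      simpa [add_assoc] using this
  apply Set.infinite_of_injective_forall_mem (f := fun n : ℕ => a + n) _ hmem
  intro m n hmn
  simp only at hmn
  exact_mod_cast (add_right_inj a).1 hmn

section Unif
open S16
open Ordinal

variable {κ : Cardinal.{0}} {lam : Ordinal.{0}}

lemma Z_sub_Iio (p : QZero lam) {η : Ordinal} (hη : η ∈ p.C) : p.Z η ⊆ Iio lam :=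
  fun _ hx => hx.2.trans (nextIn_lt_lam p.club (p.club.1 hη))

lemma Z_mem_d (p : QZero lam) {η : Ordinal} (hη : η ∈ p.C) : p.Z η ∈ p.d η :=
  (p.ultra η hη).1.2.1

/-- Key uniformity lemma: if `fil p ⊆ fil q` then there is a single bound `ε` that works
for all everywhere-positive sets. -/
lemma unif (hκ : κ.IsRegular) (hunc : Cardinal.aleph0 < κ) {p q : QZero κ.ord}
    (h : fil p ⊆ fil q) :
    ∃ ε < κ.ord, ∀ A, A ⊆ Iio κ.ord → (∀ γ ∈ p.C, A ∩ p.Z γ ∈ p.d γ) →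
      ∀ β ∈ q.C, ε ≤ β → A ∩ q.Z β ∈ q.d β := by
  classical
  by_contra hcon
  push_neg at hcon
  have hlim : Order.IsSuccLimit κ.ord := Cardinal.isSuccLimit_ord hκ.aleph0_le
  set Bad : Set Ordinal :=
    {β | β ∈ q.C ∧ ∃ A, A ⊆ Iio κ.ord ∧ (∀ γ ∈ p.C, A ∩ p.Z γ ∈ p.d γ) ∧
      A ∩ q.Z β ∉ q.d β} with hBadDef
  have hBadUnb : ∀ γ < κ.ord, (Bad \ Iic γ).Nonempty := by
    intro γ hγ
    obtain ⟨A, hA1, hA2, β, hβC, hβge, hβbad⟩ := hcon (γ + 1) (hlim.succ_lt hγ)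
    refine ⟨β, ⟨hβC, A, hA1, hA2, hβbad⟩, ?_⟩
    simp only [mem_Iic, not_le]
    exact lt_of_lt_of_le (lt_add_one γ) hβge
  set b : Ordinal → Ordinal := fun γ => sInf (Bad \ Iic γ) with hbdef
  have hbmem : ∀ γ < κ.ord, b γ ∈ Bad ∧ γ < b γ := by
    intro γ hγ
    have hm := csInf_mem (hBadUnb γ hγ)
    exact ⟨hm.1, by simpa using hm.2⟩
  have hbq : ∀ γ < κ.ord, b γ ∈ q.C := fun γ hγ => (hbmem γ hγ).1.1
  have hblam : ∀ γ < κ.ord, b γ < κ.ord := fun γ hγ => q.club.1 (hbq γ hγ)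
  set f : Ordinal → Ordinal := fun γ => nextIn p.C (nextIn q.C (b γ)) + 1 with hfdef
  have hnq : ∀ γ < κ.ord, nextIn q.C (b γ) < κ.ord := fun γ hγ =>
    nextIn_lt_lam q.club (hblam γ hγ)
  have hnp : ∀ γ < κ.ord, nextIn p.C (nextIn q.C (b γ)) < κ.ord := fun γ hγ =>
    nextIn_lt_lam p.club (hnq γ hγ)
  have hf1 : ∀ γ < κ.ord, f γ < κ.ord := fun γ hγ => hlim.succ_lt (hnp γ hγ)
  have hchain : ∀ γ < κ.ord, γ < b γ ∧ b γ < nextIn q.C (b γ) ∧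
      nextIn q.C (b γ) < nextIn p.C (nextIn q.C (b γ)) := by
    intro γ hγ
    exact ⟨(hbmem γ hγ).2, lt_nextIn q.club (hblam γ hγ), lt_nextIn p.club (hnq γ hγ)⟩
  have hf2 : ∀ γ < κ.ord, γ < f γ := by
    intro γ hγ
    obtain ⟨h1, h2, h3⟩ := hchain γ hγ
    exact lt_trans (lt_trans (lt_trans h1 h2) h3) (lt_add_one _)
  set D := cpts f κ.ord with hDdef
  have hD : IsClubIn D κ.ord := cpts_club hκ hunc f hf1 hf2
  have hDlam : ∀ γ ∈ D, γ < κ.ord := fun γ hγ => hγ.1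
  have hch : ∀ γ, γ < κ.ord → ∃ A, A ⊆ Iio κ.ord ∧ (∀ γ' ∈ p.C, A ∩ p.Z γ' ∈ p.d γ') ∧
      A ∩ q.Z (b γ) ∉ q.d (b γ) := fun γ hγ => (hbmem γ hγ).1.2
  choose! W hW1 hW2 hW3 using hch
  set U : Set Ordinal := ⋃ γ ∈ D, q.Z (b γ) with hUdef
  set A : Set Ordinal := (Iio κ.ord \ U) ∪ ⋃ γ ∈ D, (W γ ∩ q.Z (b γ)) with hAdef
  -- separation facts
  have hsep : ∀ γ ∈ D, ∀ γ' ∈ D, γ < γ' → nextIn p.C (nextIn q.C (b γ)) < γ' := by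
    intro γ hγ γ' hγ' hlt
    exact lt_trans (lt_add_one _) (hγ'.2.2 γ hlt)
  have hblock_lt : ∀ γ ∈ D, ∀ γ' ∈ D, γ < γ' → ∀ x ∈ q.Z (b γ), x < b γ' := by
    intro γ hγ γ' hγ' hlt x hx
    have h1 : x < nextIn q.C (b γ) := hx.2
    have h2 := (hchain γ (hDlam γ hγ)).2.2
    have h3 := hsep γ hγ γ' hγ' hlt
    have h4 := (hbmem γ' (hDlam γ' hγ')).2
    exact lt_trans (lt_trans (lt_trans h1 h2) h3) h4
  have hdisj : ∀ γ ∈ D, ∀ γ' ∈ D, γ ≠ γ' → ∀ x, x ∈ q.Z (b γ) → x ∉ q.Z (b γ') := by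
    intro γ hγ γ' hγ' hne x hx hx'
    rcases lt_or_gt_of_ne hne with hlt | hlt
    · exact absurd hx'.1 (not_le.2 (hblock_lt γ hγ γ' hγ' hlt x hx))
    · exact absurd hx.1 (not_le.2 (hblock_lt γ' hγ' γ hγ hlt x hx'))
  have huniq : ∀ η ∈ p.C, ∀ γ ∈ D, ∀ γ' ∈ D,
      (p.Z η ∩ q.Z (b γ)).Nonempty → (p.Z η ∩ q.Z (b γ')).Nonempty → γ = γ' := by
    have haux : ∀ η ∈ p.C, ∀ γ ∈ D, ∀ γ' ∈ D, γ < γ' →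
        (p.Z η ∩ q.Z (b γ)).Nonempty → (p.Z η ∩ q.Z (b γ')).Nonempty → False := by
      intro η hη γ hγ γ' hγ' hlt ⟨x, hx⟩ ⟨y, hy⟩
      have h1 : η ≤ x := hx.1.1
      have h2 : x < nextIn q.C (b γ) := hx.2.2
      have h3 : nextIn p.C η ≤ nextIn p.C (nextIn q.C (b γ)) :=
        nextIn_mono p.club (le_of_lt (lt_of_le_of_lt h1 h2)) (hnq γ (hDlam γ hγ))
      have h4 : y < nextIn p.C η := hy.1.2
      have h5 : b γ' ≤ y := hy.2.1
      have h6 := hsep γ hγ γ' hγ' hlt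
      have h7 := (hbmem γ' (hDlam γ' hγ')).2
      -- y < nextIn p.C η ≤ np ≤ ... < γ' < b γ' ≤ y
      exact absurd (lt_trans (lt_of_lt_of_le h4 h3) (lt_trans h6 h7)) (not_lt.2 h5)
    intro η hη γ hγ γ' hγ' hne hne'
    by_contra hnee
    rcases lt_or_gt_of_ne hnee with hlt | hlt
    · exact haux η hη γ hγ γ' hγ' hlt hne hne'
    · exact haux η hη γ' hγ' γ hγ hlt hne' hne
  have hAfil : A ∈ fil p := by
    refine ⟨?_, 0, hlim.pos, ?_⟩
    · apply union_subset diff_subset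
      apply iUnion₂_subset
      intro γ hγ
      exact (inter_subset_left).trans (hW1 γ (hDlam γ hγ))
    · intro η hη _
      by_cases hmeets : ∃ γ ∈ D, (p.Z η ∩ q.Z (b γ)).Nonempty
      · obtain ⟨γ, hγD, hne⟩ := hmeets
        have hsubA : W γ ∩ p.Z η ⊆ A ∩ p.Z η := by
          rintro x ⟨hxW, hxZ⟩
          refine ⟨?_, hxZ⟩
          by_cases hx : x ∈ q.Z (b γ)
          · exact Or.inr (mem_biUnion hγD ⟨hxW, hx⟩)
          · refine Or.inl ⟨Z_sub_Iio p hη hxZ, ?_⟩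
            intro hxU
            obtain ⟨γ', hγ', hx'⟩ := mem_iUnion₂.1 hxU
            have := huniq η hη γ hγD γ' hγ' hne ⟨x, hxZ, hx'⟩
            exact hx (this ▸ hx')
        exact uf_up (p.ultra η hη).1 _ _ (hW2 γ (hDlam γ hγD) η hη) hsubA inter_subset_right
      · have heq : A ∩ p.Z η = p.Z η := by
          apply subset_antisymm inter_subset_right
          intro x hx
          refine ⟨Or.inl ⟨Z_sub_Iio p hη hx, ?_⟩, hx⟩
          intro hxU
          obtain ⟨γ', hγ', hx'⟩ := mem_iUnion₂.1 hxU
          exact hmeets ⟨γ', hγ', ⟨x, hx, hx'⟩⟩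
        rw [heq]
        exact Z_mem_d p hη
  obtain ⟨-, ε, hε, htail⟩ := h hAfil
  obtain ⟨γ, hγD, hγε⟩ := hD.2.1 ε hε
  have hγlam : γ < κ.ord := hDlam γ hγD
  have hbad := hW3 γ hγlam
  have hmem : A ∩ q.Z (b γ) ∈ q.d (b γ) :=
    htail (b γ) (hbq γ hγlam) (le_of_lt (lt_trans hγε (hbmem γ hγlam).2))
  have heq2 : A ∩ q.Z (b γ) = W γ ∩ q.Z (b γ) := by
    ext x
    constructor
    · rintro ⟨hxA, hxZ⟩
      rcases hxA with ⟨-, hnU⟩ | hxU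
      · exact absurd (mem_biUnion hγD hxZ) hnU
      · obtain ⟨γ', hγ', hx'⟩ := mem_iUnion₂.1 hxU
        by_cases hee : γ' = γ
        · subst hee; exact ⟨hx'.1, hxZ⟩
        · exact absurd hx'.2 (hdisj γ hγD γ' hγ' (Ne.symm hee) x hxZ)
    · intro hx
      exact ⟨Or.inr (mem_biUnion hγD hx), hx.2⟩
  rw [heq2] at hmem
  exact hbad hmem

end Unif

section Part1
open Ordinal S16

variable {κ : Cardinal.{0}}

lemma part1 (hκ : κ.IsRegular) (hunc : Cardinal.aleph0 < κ)
    (δ : Ordinal) (hδ : δ ≤ κ.ord) (p : Ordinal → QZero κ.ord)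
    (hmono : ∀ ξ ζ : Ordinal, ξ ≤ ζ → ζ < δ → le0 (p ξ) (p ζ)) :
    ∃ r : QZero κ.ord, ∀ ξ < δ, le0 (p ξ) r := by
  classical
  have hlim : Order.IsSuccLimit κ.ord := Cardinal.isSuccLimit_ord hκ.aleph0_le
  have hchoice : ∀ ζ ξ : Ordinal, ∃ ε < κ.ord, (ζ ≤ ξ → ξ < δ → ∀ A, A ⊆ Iio κ.ord →
      (∀ γ ∈ (p ζ).C, A ∩ (p ζ).Z γ ∈ (p ζ).d γ) →
      ∀ β ∈ (p ξ).C, ε ≤ β → A ∩ (p ξ).Z β ∈ (p ξ).d β) := by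
    intro ζ ξ
    by_cases hc : ζ ≤ ξ ∧ ξ < δ
    · obtain ⟨ε, hε, hspec⟩ := unif hκ hunc (hmono ζ ξ hc.1 hc.2)
      exact ⟨ε, hε, fun _ _ => hspec⟩
    · exact ⟨0, hlim.pos, fun h1 h2 => absurd ⟨h1, h2⟩ hc⟩
  choose E hE1 hE2 using hchoice
  set f : Ordinal → Ordinal := fun γ =>
    max (max (Ordinal.bsup (γ+1) (fun ξ _ => if ξ < δ then nextIn ((p ξ).C) γ else 0))
      (Ordinal.bsup (γ+1) (fun ζ _ => Ordinal.bsup (γ+1) (fun ξ _ => E ζ ξ)))) (γ+1) with hf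
  have hcard : ∀ γ < κ.ord, (γ + 1).card < κ.ord.cof := by
    intro γ hγ; rw [hκ.cof_eq, ← Cardinal.lt_ord]; exact hlim.succ_lt hγ
  have hf1 : ∀ γ < κ.ord, f γ < κ.ord := by
    intro γ hγ
    apply max_lt (max_lt ?_ ?_) (hlim.succ_lt hγ)
    · apply Ordinal.bsup_lt_ord (hcard γ hγ)
      intro i _
      by_cases hiδ : i < δ
      · simp only [hiδ, if_true]; exact nextIn_lt_lam (p i).club hγ
      · simp only [hiδ, if_false]; exact hlim.pos
    · apply Ordinal.bsup_lt_ord (hcard γ hγ); intro i _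
      apply Ordinal.bsup_lt_ord (hcard γ hγ); intro j _
      exact hE1 i j
  have hf2 : ∀ γ < κ.ord, γ < f γ := fun γ _ => lt_of_lt_of_le (lt_add_one γ) (le_max_right _ _)
  set C' := cpts f κ.ord with hC'
  have hC'club : IsClubIn C' κ.ord := cpts_club hκ hunc f hf1 hf2
  have hnext_lt : ∀ α ∈ C', ∀ ξ < δ, ξ < α → ∀ β < α, nextIn ((p ξ).C) β < α := by
    intro α hα ξ hξδ hξα β hβα
    set γm := max ξ β with hγm
    have hγmα : γm < α := max_lt hξα hβα
    have hγmlam : γm < κ.ord := hγmα.trans hα.1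
    have h1 : nextIn ((p ξ).C) β ≤ nextIn ((p ξ).C) γm :=
      nextIn_mono (p ξ).club (le_max_right _ _) hγmlam
    have h2 : nextIn ((p ξ).C) γm ≤ f γm := by
      refine le_trans ?_ (le_trans (le_max_left _ _) (le_max_left _ _))
      have := Ordinal.le_bsup (fun ξ' (_ : ξ' < γm+1) => if ξ' < δ then nextIn ((p ξ').C) γm else 0)
        ξ (Order.lt_succ_iff.2 (le_max_left _ _))
      simpa [hξδ] using this
    exact lt_of_le_of_lt (h1.trans h2) (hα.2.2 γm hγmα)
  have hmemC : ∀ α ∈ C', ∀ ξ < δ, ξ < α → α ∈ (p ξ).C := by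
    intro α hα ξ hξδ hξα
    have hα0 : α ≠ 0 := by rintro rfl; exact not_lt_of_ge (zero_le (a := ξ)) hξα
    apply (p ξ).club.2.2 α hα.1 hα0
    apply sSup_inter_Iio_eq hα0
    intro β hβα
    set β' := max β ξ with hβ'
    have hβ'α : β' < α := max_lt hβα hξα
    refine ⟨nextIn ((p ξ).C) β', nextIn_mem (p ξ).club (hβ'α.trans hα.1), ?_, ?_⟩
    · exact lt_of_le_of_lt (le_max_left _ _) (lt_nextIn (p ξ).club (hβ'α.trans hα.1))
    · exact hnext_lt α hα ξ hξδ hξα β' hβ'α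
  have hE_lt : ∀ α ∈ C', ∀ ζ < α, ∀ ξ < α, E ζ ξ < α := by
    intro α hα ζ hζ ξ hξ
    set γm := max ζ ξ with hγm
    have hγmα : γm < α := max_lt hζ hξ
    have hA : E ζ ξ ≤ Ordinal.bsup (γm+1) (fun ξ' _ => E ζ ξ') :=
      Ordinal.le_bsup _ ξ (Order.lt_succ_iff.2 (le_max_right _ _))
    have hB : Ordinal.bsup (γm+1) (fun ξ' _ => E ζ ξ') ≤
        Ordinal.bsup (γm+1) (fun ζ' (_ : ζ' < γm+1) => Ordinal.bsup (γm+1) (fun ξ' _ => E ζ' ξ')) :=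
      Ordinal.le_bsup _ ζ (Order.lt_succ_iff.2 (le_max_left _ _))
    have h2 : E ζ ξ ≤ f γm :=
      le_trans (hA.trans hB) (le_trans (le_max_right _ _) (le_max_left _ _))
    exact lt_of_le_of_lt h2 (hα.2.2 γm hγmα)
  set H : Ordinal → Set (Set Ordinal) := fun α => {B | ∃ ξ, ξ < δ ∧ ξ < α ∧ B ⊆ Iio κ.ord ∧
    ∀ β ∈ (p ξ).C, α ≤ β → B ∩ (p ξ).Z β ∈ (p ξ).d β} with hH
  have hfip : ∀ α ∈ C', ∀ T : Finset (Set Ordinal), ↑T ⊆ H α →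
      ((Ico α (nextIn C' α)) ∩ ⋂₀ ↑T).Infinite := by
    intro α hαC T hT
    have hαlam : α < κ.ord := hαC.1
    have hnC' : nextIn C' α ∈ C' := nextIn_mem hC'club hαlam
    have hαn : α < nextIn C' α := lt_nextIn hC'club hαlam
    have hZinf : (Ico α (nextIn C' α)).Infinite := Ico_infinite' (cpts_isLimit hnC' hf2) hαn
    rcases T.eq_empty_or_nonempty with rfl | hTne
    · simpa using hZinf
    · have hsel : ∀ B ∈ T, ∃ ξ, ξ < δ ∧ ξ < α ∧ B ⊆ Iio κ.ord ∧
          ∀ β ∈ (p ξ).C, α ≤ β → B ∩ (p ξ).Z β ∈ (p ξ).d β := fun B hB => hT hB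
      choose! ξsel hs1 hs2 hs3 hs4 using hsel
      obtain ⟨B0, hB0⟩ := hTne
      set s := T.image ξsel with hs
      have hsne : s.Nonempty := ⟨ξsel B0, Finset.mem_image_of_mem _ hB0⟩
      set ξm := s.max' hsne with hξm
      have hξmT : ∃ B ∈ T, ξsel B = ξm := by
        have := s.max'_mem hsne
        simpa [hs, Finset.mem_image] using this
      obtain ⟨Bm, hBm, hBmξ⟩ := hξmT
      have hξmδ : ξm < δ := hBmξ ▸ hs1 Bm hBm
      have hξmα : ξm < α := hBmξ ▸ hs2 Bm hBm
      have hle : ∀ B ∈ T, ξsel B ≤ ξm := fun B hB => s.le_max' _ (Finset.mem_image_of_mem _ hB)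
      set q := p ξm with hq
      have hαq : α ∈ q.C := hmemC α hαC ξm hξmδ hξmα
      have hWmem : ∀ B ∈ T, (B ∪ Iio α) ∩ q.Z α ∈ q.d α := by
        intro B hB
        have hall : ∀ γ ∈ (p (ξsel B)).C, (B ∪ Iio α) ∩ (p (ξsel B)).Z γ ∈ (p (ξsel B)).d γ := by
          intro γ hγ
          rcases lt_or_ge γ α with hγα | hαγ
          · have hγmem : α ∈ (p (ξsel B)).C := hmemC α hαC _ (hs1 B hB) (hs2 B hB)
            have hZsub : (p (ξsel B)).Z γ ⊆ Iio α := by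
              intro x hx
              exact lt_of_lt_of_le hx.2 (nextIn_le (p (ξsel B)).club hγmem hγα)
            have heq : (B ∪ Iio α) ∩ (p (ξsel B)).Z γ = (p (ξsel B)).Z γ :=
              inter_eq_self_of_subset_right (fun x hx => Or.inr (hZsub hx))
            rw [heq]; exact Z_mem_d _ hγ
          · have h1 : B ∩ (p (ξsel B)).Z γ ∈ (p (ξsel B)).d γ := hs4 B hB γ hγ hαγ
            refine uf_up ((p (ξsel B)).ultra γ hγ).1 _ _ h1 ?_ inter_subset_right
            exact inter_subset_inter_left _ subset_union_left
        have hsub : (B ∪ Iio α) ⊆ Iio κ.ord :=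
          union_subset (hs3 B hB) (fun x hx => lt_trans hx hαlam)
        have hEα : E (ξsel B) ξm ≤ α := le_of_lt (hE_lt α hαC _ (hs2 B hB) ξm hξmα)
        exact hE2 (ξsel B) ξm (hle B hB) hξmδ _ hsub hall α hαq hEα
      set T' := T.image (fun B => (B ∪ Iio α) ∩ q.Z α) with hT'
      have hmemd : q.Z α ∩ ⋂₀ ↑T' ∈ q.d α := by
        apply uf_finset_inter (q.ultra α hαq).1 T'
        intro B hB
        rw [hT'] at hB
        obtain ⟨B₀, hB₀, rfl⟩ := Finset.mem_image.1 hB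
        exact hWmem B₀ hB₀
      have hinf : (q.Z α ∩ ⋂₀ ↑T').Infinite := np_infinite (q.ultra α hαq) hmemd
      apply hinf.mono
      intro x hx
      have hxq : x ∈ q.Z α := hx.1
      have hxα : α ≤ x := hxq.1
      refine ⟨⟨hxα, lt_of_lt_of_le hxq.2 ?_⟩, ?_⟩
      · exact le_of_lt (hnext_lt (nextIn C' α) hnC' ξm hξmδ (hξmα.trans hαn) α hαn)
      · rw [mem_sInter]
        intro B hB
        have hmemT' : (B ∪ Iio α) ∩ q.Z α ∈ (↑T' : Set (Set Ordinal)) := by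
          rw [hT']
          exact Finset.mem_coe.2 (Finset.mem_image_of_mem _ (Finset.mem_coe.1 hB))
        have hx' : x ∈ (B ∪ Iio α) ∩ q.Z α := by
          have h2 := hx.2
          rw [mem_sInter] at h2
          exact h2 _ hmemT'
        rcases hx'.1 with h | h
        · exact h
        · exact absurd h (not_lt.2 hxα)
  have hzdef : ∀ α, α ∈ C' → ∃ d₀, IsNonprincipalOn (Ico α (nextIn C' α)) d₀ ∧
      ∀ A ∈ H α, A ∩ (Ico α (nextIn C' α)) ∈ d₀ :=
    fun α hα => exists_np _ _ (hfip α hα)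
  choose! dfun hd1 hd2 using hzdef
  refine ⟨⟨C', fun α => if α ∈ C' then dfun α else ∅, hC'club,
    fun α hα => cpts_isLimit hα hf2, ?_, fun α hα => if_neg hα⟩, ?_⟩
  · intro α hα
    simp only [if_pos hα]
    exact hd1 α hα
  intro ξ hξδ A hA
  obtain ⟨hAsub, ε, hε, htail⟩ := hA
  refine ⟨hAsub, max ε ξ + 1, hlim.succ_lt (max_lt hε (lt_of_lt_of_le hξδ hδ)), ?_⟩
  intro α hαC' hαge
  have hmax : max ε ξ < α := lt_of_lt_of_le (lt_add_one _) hαge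
  have hξα : ξ < α := lt_of_le_of_lt (le_max_right ε ξ) hmax
  have hεα : ε < α := lt_of_le_of_lt (le_max_left ε ξ) hmax
  have hmemH : A ∈ H α := ⟨ξ, hξδ, hξα, hAsub, fun β hβ hαβ => htail β hβ (le_trans hεα.le hαβ)⟩
  show A ∩ Ico α _ ∈ _
  simp only [if_pos hαC']
  exact hd2 α hαC' A hmemH

end Part1

section Part2
open Ordinal Cardinal S16

variable {κ : Cardinal.{0}} {lam : Ordinal.{0}}

lemma two_powerlt_eq (hunc : Cardinal.aleph0 < κ) (hpow : κ ^< κ = κ) :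
    (2 : Cardinal) ^< κ = κ := by
  have h2κ : (2 : Cardinal) ≤ κ := by
    calc (2 : Cardinal) ≤ ℵ₀ := by exact_mod_cast (Cardinal.nat_lt_aleph0 2).le
      _ ≤ κ := hunc.le
  apply le_antisymm
  · rw [Cardinal.powerlt_le]
    intro x hx
    calc (2 : Cardinal) ^ x ≤ κ ^ x := Cardinal.power_le_power_right h2κ
      _ ≤ κ ^< κ := Cardinal.le_powerlt κ hx
      _ = κ := hpow
  · by_contra hcon
    push_neg at hcon
    have h1 : (2 : Cardinal) ^ ((2 : Cardinal) ^< κ) ≤ (2 : Cardinal) ^< κ :=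
      Cardinal.le_powerlt 2 hcon
    exact absurd h1 (not_le.2 (Cardinal.cantor _))

lemma QZero_ext {p q : QZero lam} (hC : p.C = q.C) (hd : p.d = q.d) : p = q := by
  cases p; cases q
  simp only at hC hd
  subst hC; subst hd
  rfl

lemma QZero_C_eq (p : QZero lam) : p.C = {δ | (p.d δ).Nonempty} := by
  ext δ
  constructor
  · intro h; exact ⟨_, Z_mem_d p h⟩
  · intro h
    by_contra hc
    have h' : (p.d δ).Nonempty := h
    rw [p.d_junk δ hc] at h'
    exact Set.not_nonempty_empty h'

lemma QZero_d_inj : Function.Injective (fun (p : QZero lam) => p.d) := by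
  intro p q h
  simp only at h
  exact QZero_ext (by rw [QZero_C_eq, QZero_C_eq, h]) h

/-- sets of subsets of a small set are few -/
lemma mk_small_families {I : Set Ordinal} :
    #(↥{e : Set (Set Ordinal) | ∀ A ∈ e, A ⊆ I}) ≤ 2 ^ ((2 : Cardinal) ^ #(↥I)) := by
  have hinj : Function.Injective
      (fun (e : ↥{e : Set (Set Ordinal) | ∀ A ∈ e, A ⊆ I}) =>
        ({B : Set ↥I | Subtype.val '' B ∈ e.1} : Set (Set ↥I))) := by
    intro e1 e2 h
    apply Subtype.ext
    apply Set.eq_of_subset_of_subset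
    · intro A hA
      have hsub : A ⊆ range (Subtype.val : ↥I → Ordinal) := by
        rw [Subtype.range_coe]; exact e1.2 A hA
      have himg : Subtype.val '' (Subtype.val ⁻¹' A) = A := image_preimage_eq_of_subset hsub
      have h1 : (Subtype.val ⁻¹' A : Set ↥I) ∈ {B : Set ↥I | Subtype.val '' B ∈ e1.1} := by
        simp only [mem_setOf_eq, himg]; exact hA
      have h' : ({B : Set ↥I | Subtype.val '' B ∈ e1.1} : Set (Set ↥I)) =
          {B : Set ↥I | Subtype.val '' B ∈ e2.1} := h
      rw [h'] at h1
      simpa only [mem_setOf_eq, himg] using h1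
    · intro A hA
      have hsub : A ⊆ range (Subtype.val : ↥I → Ordinal) := by
        rw [Subtype.range_coe]; exact e2.2 A hA
      have himg : Subtype.val '' (Subtype.val ⁻¹' A) = A := image_preimage_eq_of_subset hsub
      have h1 : (Subtype.val ⁻¹' A : Set ↥I) ∈ {B : Set ↥I | Subtype.val '' B ∈ e2.1} := by
        simp only [mem_setOf_eq, himg]; exact hA
      have h' : ({B : Set ↥I | Subtype.val '' B ∈ e1.1} : Set (Set ↥I)) =
          {B : Set ↥I | Subtype.val '' B ∈ e2.1} := h
      rw [← h'] at h1
      simpa only [mem_setOf_eq, himg] using h1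
  calc #(↥{e : Set (Set Ordinal) | ∀ A ∈ e, A ⊆ I}) ≤ #(Set (Set ↥I)) :=
        Cardinal.mk_le_of_injective hinj
    _ = 2 ^ #(Set ↥I) := Cardinal.mk_set
    _ = 2 ^ ((2 : Cardinal) ^ #(↥I)) := by rw [Cardinal.mk_set]

lemma mk_upper (hκ : κ.IsRegular) (hunc : Cardinal.aleph0 < κ) (hpow : κ ^< κ = κ) :
    #(QZero κ.ord) ≤ Cardinal.lift.{1} ((2 : Cardinal) ^ κ) := by
  classical
  have hlim : Order.IsSuccLimit κ.ord := Cardinal.isSuccLimit_ord hκ.aleph0_le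
  set 𝒟 : ↥(Iio κ.ord) → Set (Set (Set Ordinal)) :=
    fun δ => {e | ∃ γ < κ.ord, ∀ A ∈ e, A ⊆ Ico δ.1 γ} with h𝒟
  -- the injection
  have hmapmem : ∀ p : QZero κ.ord, ∀ δ : ↥(Iio κ.ord), p.d δ.1 ∈ 𝒟 δ := by
    intro p δ
    by_cases hδ : δ.1 ∈ p.C
    · exact ⟨nextIn p.C δ.1, nextIn_lt_lam p.club δ.2, uf_sub (p.ultra δ.1 hδ).1⟩
    · rw [p.d_junk δ.1 hδ]
      exact ⟨0, hlim.pos, by simp⟩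
  have hinj : Function.Injective
      (fun p : QZero κ.ord => (⟨fun δ => p.d δ.1, hmapmem p⟩ :
        {g : ↥(Iio κ.ord) → Set (Set Ordinal) // ∀ δ, g δ ∈ 𝒟 δ})) := by
    intro p q h
    simp only [Subtype.mk.injEq] at h
    apply QZero_d_inj
    funext δ
    show p.d δ = q.d δ
    by_cases hδ : δ < κ.ord
    · exact congrFun h ⟨δ, hδ⟩
    · rw [p.d_junk δ (fun hc => hδ (p.club.1 hc)), q.d_junk δ (fun hc => hδ (q.club.1 hc))]
  have hbound : ∀ δ : ↥(Iio κ.ord), #(↥(𝒟 δ)) ≤ Cardinal.lift.{1} ((2 : Cardinal) ^ κ) := by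
    intro δ
    have hcover : 𝒟 δ = ⋃ γ : ↥(Iio κ.ord), {e | ∀ A ∈ e, A ⊆ Ico δ.1 γ.1} := by
      ext e
      simp only [h𝒟, mem_setOf_eq, mem_iUnion]
      constructor
      · rintro ⟨γ, hγ, hsub⟩; exact ⟨⟨γ, hγ⟩, hsub⟩
      · rintro ⟨γ, hsub⟩; exact ⟨γ.1, γ.2, hsub⟩
    have hper : ∀ γ : ↥(Iio κ.ord),
        #(↥{e : Set (Set Ordinal) | ∀ A ∈ e, A ⊆ Ico δ.1 γ.1}) ≤
          Cardinal.lift.{1} ((2 : Cardinal) ^ κ) := by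
      intro γ
      have h1 : #(↥(Ico δ.1 γ.1)) ≤ Cardinal.lift.{1} γ.1.card := by
        calc #(↥(Ico δ.1 γ.1)) ≤ #(↥(Iio γ.1)) := Cardinal.mk_le_mk_of_subset Ico_subset_Iio_self
          _ = Cardinal.lift.{1} γ.1.card := Ordinal.mk_Iio_ordinal γ.1
      have h2 : (2 : Cardinal.{1}) ^ #(↥(Ico δ.1 γ.1)) ≤ Cardinal.lift.{1} κ := by
        calc (2 : Cardinal.{1}) ^ #(↥(Ico δ.1 γ.1)) ≤
              (2 : Cardinal.{1}) ^ Cardinal.lift.{1} γ.1.card :=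
            Cardinal.power_le_power_left two_ne_zero h1
          _ = Cardinal.lift.{1} ((2 : Cardinal) ^ γ.1.card) := by
            rw [Cardinal.lift_power, Cardinal.lift_two]
          _ ≤ Cardinal.lift.{1} κ := by
            rw [Cardinal.lift_le]
            exact le_trans (Cardinal.le_powerlt 2 (Cardinal.lt_ord.1 γ.2))
              (le_of_eq (two_powerlt_eq hunc hpow))
      calc #(↥{e : Set (Set Ordinal) | ∀ A ∈ e, A ⊆ Ico δ.1 γ.1}) ≤
            2 ^ ((2 : Cardinal) ^ #(↥(Ico δ.1 γ.1))) := mk_small_families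
        _ ≤ 2 ^ Cardinal.lift.{1} κ := Cardinal.power_le_power_left two_ne_zero h2
        _ = Cardinal.lift.{1} ((2 : Cardinal) ^ κ) := by
          rw [Cardinal.lift_power, Cardinal.lift_two]
    calc #(↥(𝒟 δ)) = #(↥(⋃ γ : ↥(Iio κ.ord), {e | ∀ A ∈ e, A ⊆ Ico δ.1 γ.1})) :=
          Cardinal.mk_congr (Equiv.setCongr hcover)
      _ ≤ #(↥(Iio κ.ord)) * ⨆ γ : ↥(Iio κ.ord), #(↥{e | ∀ A ∈ e, A ⊆ Ico δ.1 γ.1}) :=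
          Cardinal.mk_iUnion_le _
      _ ≤ Cardinal.lift.{1} κ * Cardinal.lift.{1} ((2 : Cardinal) ^ κ) := by
          apply mul_le_mul'
          · rw [Ordinal.mk_Iio_ordinal, Cardinal.card_ord]
          · exact ciSup_le' hper
      _ = Cardinal.lift.{1} (κ * (2 : Cardinal) ^ κ) := (Cardinal.lift_mul _ _).symm
      _ = Cardinal.lift.{1} ((2 : Cardinal) ^ κ) := by
          rw [Cardinal.mul_eq_max hκ.aleph0_le
            (hκ.aleph0_le.trans (Cardinal.cantor κ).le), max_eq_right (Cardinal.cantor κ).le]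
  calc #(QZero κ.ord) ≤ #({g : ↥(Iio κ.ord) → Set (Set Ordinal) // ∀ δ, g δ ∈ 𝒟 δ}) :=
        Cardinal.mk_le_of_injective hinj
    _ = #(∀ δ : ↥(Iio κ.ord), ↥(𝒟 δ)) := Cardinal.mk_congr (Equiv.subtypePiEquivPi)
    _ = Cardinal.prod (fun δ : ↥(Iio κ.ord) => #(↥(𝒟 δ))) := Cardinal.mk_pi _
    _ ≤ Cardinal.prod (fun _ : ↥(Iio κ.ord) => Cardinal.lift.{1} ((2 : Cardinal) ^ κ)) :=
        Cardinal.prod_le_prod _ _ hbound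
    _ = Cardinal.lift.{1} ((2 : Cardinal) ^ κ) ^ #(↥(Iio κ.ord)) := Cardinal.prod_const' _ _
    _ = Cardinal.lift.{1} ((2 : Cardinal) ^ κ) := by
        rw [Ordinal.mk_Iio_ordinal, Cardinal.card_ord, ← Cardinal.lift_power,
          ← Cardinal.power_mul, Cardinal.mul_eq_self hκ.aleph0_le]

end Part2

section Part2b
open Ordinal Cardinal S16

variable {κ : Cardinal.{0}}

lemma nat_mem_Ico {a b : Ordinal} (hb : Order.IsSuccLimit b) (hab : a < b) (n : ℕ) :
    a + (n : Ordinal) ∈ Ico a b := by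
  induction n with
  | zero => simpa using hab
  | succ n ih =>
    refine ⟨le_self_add, ?_⟩
    have h1 : (a + n) + 1 < b := hb.succ_lt ih.2
    simpa [add_assoc] using h1

lemma mk_club (hκ : κ.IsRegular) {C : Set Ordinal} (hC : IsClubIn C κ.ord) :
    #(↥C) = Cardinal.lift.{1} κ := by
  classical
  set e := Ordinal.ToType.mk (o := κ.ord) with he
  set Cs : Set κ.ord.ToType := {x | (e.symm x).1 ∈ C} with hCs
  have hmm : ∀ c : ↥C, (e (⟨c.1, hC.1 c.2⟩ : Iio κ.ord)) ∈ Cs := by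
    intro c
    simp only [hCs, mem_setOf_eq, OrderIso.symm_apply_apply]
    exact c.2
  have hequiv : Nonempty (↥C ≃ ↥Cs) := by
    refine ⟨{ toFun := fun c => ⟨e ⟨c.1, hC.1 c.2⟩, hmm c⟩,
              invFun := fun x => ⟨(e.symm x.1).1, x.2⟩,
              left_inv := fun c => ?_, right_inv := fun x => ?_ }⟩
    · apply Subtype.ext
      simp only [OrderIso.symm_apply_apply]
    · apply Subtype.ext
      show e ⟨(e.symm x.1).1, _⟩ = x.1
      have heq : (⟨(e.symm x.1).1, hC.1 x.2⟩ : ↥(Iio κ.ord)) = e.symm x.1 := Subtype.ext rfl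
      rw [heq, OrderIso.apply_symm_apply]
  have h1 : #(↥C) = Cardinal.lift.{1} #(↥Cs) := by
    have := Cardinal.lift_mk_eq'.2 hequiv
    rwa [Cardinal.lift_uzero] at this
  have hle : #(↥Cs) ≤ κ := by
    have h2 := Cardinal.mk_set_le Cs
    rwa [Cardinal.mk_toType, Cardinal.card_ord] at h2
  have hge : κ ≤ #(↥Cs) := by
    by_contra hcon
    push_neg at hcon
    set g : ↥Cs → Ordinal := fun x => (e.symm x.1).1 with hg
    have hsup : (⨆ x, g x) < κ.ord :=
      Cardinal.iSup_lt_ord_of_isRegular hκ hcon (fun x => (e.symm x.1).2)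
    obtain ⟨c, hcC, hgt⟩ := hC.2.1 _ hsup
    have hxmem : e ⟨c, hC.1 hcC⟩ ∈ Cs := by
      simp only [hCs, mem_setOf_eq, OrderIso.symm_apply_apply]
      exact hcC
    set xx : ↥Cs := ⟨e ⟨c, hC.1 hcC⟩, hxmem⟩ with hxx
    have hgxx : g xx = c := by
      simp only [hg, hxx, OrderIso.symm_apply_apply]
    have hle2 : c ≤ ⨆ x, g x := hgxx ▸ le_ciSup (Ordinal.bddAbove_range g) xx
    exact absurd hgt (not_lt.2 hle2)
  rw [h1, le_antisymm hle hge]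

lemma two_ufs {Z : Set Ordinal} {a : Ordinal} (hZ : ∀ n : ℕ, a + (n : Ordinal) ∈ Z) :
    ∃ d1 d2, IsNonprincipalOn Z d1 ∧ IsNonprincipalOn Z d2 ∧ d1 ≠ d2 := by
  classical
  set A : Set Ordinal := range (fun n : ℕ => a + ((2 * n : ℕ) : Ordinal)) with hA
  have hinjadd : ∀ m n : ℕ, a + (m : Ordinal) = a + (n : Ordinal) → m = n := by
    intro m n h
    exact_mod_cast (add_right_inj a).1 h
  have hAinf : (Z ∩ A).Infinite := by
    apply Set.infinite_of_injective_forall_mem (f := fun n : ℕ => a + ((2 * n : ℕ) : Ordinal))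
    · intro m n h
      have := hinjadd _ _ h
      omega
    · intro n
      exact ⟨hZ _, ⟨n, rfl⟩⟩
  have hBinf : (Z ∩ (Z \ A)).Infinite := by
    apply Set.infinite_of_injective_forall_mem (f := fun n : ℕ => a + ((2 * n + 1 : ℕ) : Ordinal))
    · intro m n h
      have := hinjadd _ _ h
      omega
    · intro n
      refine ⟨hZ _, hZ _, ?_⟩
      rintro ⟨m, hm⟩
      have := hinjadd _ _ hm
      omega
  obtain ⟨d1, hd1, hd1m⟩ := exists_np Z {A} (by
    intro T hT
    apply hAinf.mono
    rintro x ⟨hxZ, hxA⟩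
    refine ⟨hxZ, ?_⟩
    rw [mem_sInter]
    intro B hB
    have : B = A := hT hB
    rw [this]; exact hxA)
  obtain ⟨d2, hd2, hd2m⟩ := exists_np Z {Z \ A} (by
    intro T hT
    apply hBinf.mono
    rintro x ⟨hxZ, hxB⟩
    refine ⟨hxZ, ?_⟩
    rw [mem_sInter]
    intro B hB
    have : B = Z \ A := hT hB
    rw [this]; exact hxB)
  refine ⟨d1, d2, hd1, hd2, ?_⟩
  intro heq
  have h1 : A ∩ Z ∈ d1 := hd1m A rfl
  have h2 : (Z \ A) ∩ Z ∈ d2 := hd2m _ rfl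
  rw [← heq] at h2
  have h3 := uf_inter hd1.1 _ _ h1 h2
  have h4 : (A ∩ Z) ∩ ((Z \ A) ∩ Z) = ∅ := by
    ext x
    simp only [mem_inter_iff, mem_diff, mem_empty_iff_false, iff_false]
    tauto
  rw [h4] at h3
  exact uf_empty hd1.1 h3

lemma mk_lower (hκ : κ.IsRegular) (hunc : Cardinal.aleph0 < κ) :
    Cardinal.lift.{1} ((2 : Cardinal) ^ κ) ≤ #(QZero κ.ord) := by
  classical
  have hlim : Order.IsSuccLimit κ.ord := Cardinal.isSuccLimit_ord hκ.aleph0_le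
  set f0 : Ordinal → Ordinal := fun β => β + β + 1 with hf0
  have hf1 : ∀ β < κ.ord, f0 β < κ.ord := fun β hβ => hlim.succ_lt (add_lt_lam hκ hβ hβ)
  have hf2 : ∀ β < κ.ord, β < f0 β := fun β _ =>
    lt_of_le_of_lt (le_self_add) (lt_add_one _)
  set C₀ := cpts f0 κ.ord with hC₀
  have hclub : IsClubIn C₀ κ.ord := cpts_club hκ hunc f0 hf1 hf2
  have hlimmem : ∀ α ∈ C₀, Order.IsSuccLimit α := fun α h => cpts_isLimit h hf2
  have hblock : ∀ δ : ↥C₀, ∀ n : ℕ, δ.1 + (n : Ordinal) ∈ Ico δ.1 (nextIn C₀ δ.1) := by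
    intro δ n
    exact nat_mem_Ico (hlimmem _ (nextIn_mem hclub (hclub.1 δ.2)))
      (lt_nextIn hclub (hclub.1 δ.2)) n
  have hch : ∀ δ : ↥C₀, ∃ d1 d2, IsNonprincipalOn (Ico δ.1 (nextIn C₀ δ.1)) d1 ∧
      IsNonprincipalOn (Ico δ.1 (nextIn C₀ δ.1)) d2 ∧ d1 ≠ d2 := fun δ => two_ufs (hblock δ)
  choose D1 D2 hD1 hD2 hDne using hch
  have hΦultra : ∀ S : Set ↥C₀, ∀ δ ∈ C₀, IsNonprincipalOn (Ico δ (nextIn C₀ δ))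
      ((fun δ' => if h : δ' ∈ C₀ then
        (if (⟨δ', h⟩ : ↥C₀) ∈ S then D1 ⟨δ', h⟩ else D2 ⟨δ', h⟩) else ∅) δ) := by
    intro S δ hδ
    simp only [dif_pos hδ]
    by_cases hS : (⟨δ, hδ⟩ : ↥C₀) ∈ S
    · simp only [if_pos hS]; exact hD1 _
    · simp only [if_neg hS]; exact hD2 _
  set Φ : Set ↥C₀ → QZero κ.ord := fun S =>
    ⟨C₀, fun δ' => if h : δ' ∈ C₀ then
        (if (⟨δ', h⟩ : ↥C₀) ∈ S then D1 ⟨δ', h⟩ else D2 ⟨δ', h⟩) else ∅,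
      hclub, hlimmem, hΦultra S, fun δ h => dif_neg h⟩ with hΦ
  have hΦinj : Function.Injective Φ := by
    intro S T h
    have hd := congrArg QZero.d h
    ext x
    have hx := congrFun hd x.1
    simp only [hΦ, dif_pos x.2] at hx
    constructor
    · intro hxS
      by_contra hxT
      rw [if_pos hxS, if_neg hxT] at hx
      exact hDne _ hx
    · intro hxT
      by_contra hxS
      rw [if_neg hxS, if_pos hxT] at hx
      exact hDne _ hx.symm
  have hset : #(Set ↥C₀) = 2 ^ Cardinal.lift.{1} κ := by
    rw [Cardinal.mk_set, mk_club hκ hclub]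
  calc Cardinal.lift.{1} ((2 : Cardinal) ^ κ) = 2 ^ Cardinal.lift.{1} κ := by
        rw [Cardinal.lift_power, Cardinal.lift_two]
    _ = #(Set ↥C₀) := hset.symm
    _ ≤ #(QZero κ.ord) := Cardinal.mk_le_of_injective hΦinj

end Part2b


/-- `Q⁰_λ` ordered by `≤⁰` is a `(<λ⁺)`-complete forcing notion: every `≤⁰`-increasing
sequence of length `≤ λ` has a `≤⁰`-upper bound; moreover `|Q⁰_λ| = 2^(2^(<λ))`. -/
theorem statement16 (κ : Cardinal.{0}) (hreg : κ.IsRegular) (hunc : Cardinal.aleph0 < κ)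
    (hpow : κ ^< κ = κ) :
    (∀ δ : Ordinal, δ ≤ κ.ord → ∀ p : Ordinal → QZero κ.ord,
      (∀ ξ ζ : Ordinal, ξ ≤ ζ → ζ < δ → le0 (p ξ) (p ζ)) →
      ∃ r : QZero κ.ord, ∀ ξ < δ, le0 (p ξ) r) ∧
    Cardinal.mk (QZero κ.ord) = Cardinal.lift.{1,0} (2 ^ ((2 : Cardinal) ^< κ)) := by
  constructor
  · intro δ hδ p hmono
    exact part1 hreg hunc δ hδ p hmono
  · rw [two_powerlt_eq hunc hpow]
    exact le_antisymm (mk_upper hreg hunc hpow) (mk_lower hreg hunc)
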